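/- Let F_1, F_2 be distribution functions on [0,1] satisfying F_k(t) ≥ (1/3)(t - a_k) for all t ∈ [0,1] and k = 1,2, where a_1, a_2 ∈ (0,1/2). Let h : (0,1)² → [0,∞) be non-increasing in each argument (or more generally measurable and nonnegative with the monotonicity needed for the integration-by-parts argument). Then ∫∫ h(s,t) dF_1(s) dF_2(t) ≥ (1/9) ∫_{a_1}^{1-a_1} ∫_{a_2}^{1-a_2} h(s,t) ds dt. -/

import Mathlib

open MeasureTheory Set ENNReal

lemma lemB (F : StieltjesFunction ℝ) (a : ℝ) (ha : a ∈ Set.Ioo (0:ℝ) (1/2))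
    (hF0 : F 0 = 0) (hF : ∀ t ∈ Set.Icc (0:ℝ) 1, (1/3) * (t - a) ≤ F t)
    (S : Set ℝ) (hS : IsLowerSet S) :
    volume (S ∩ Icc a (1 - a)) ≤ 3 * F.measure (S ∩ Icc 0 1) := by
  rcases Set.eq_empty_or_nonempty (S ∩ Icc a (1 - a)) with he | ⟨y₀, hy₀⟩
  · simp [he]
  have ha0 : (0:ℝ) < a := ha.1
  have ha2 : a < 1/2 := ha.2
  have hsub : Icc a (1 - a) ⊆ Icc (0:ℝ) 1 := Icc_subset_Icc (by linarith) (by linarith)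
  have hy₀' : y₀ ∈ S ∩ Icc 0 1 := ⟨hy₀.1, hsub hy₀.2⟩
  have hne : (S ∩ Icc (0:ℝ) 1).Nonempty := ⟨y₀, hy₀'⟩
  have hbdd : BddAbove (S ∩ Icc (0:ℝ) 1) := ⟨1, fun z hz => hz.2.2⟩
  set x := sSup (S ∩ Icc (0:ℝ) 1) with hx
  have hfin : F.measure (S ∩ Icc 0 1) ≠ ⊤ := by
    refine ne_top_of_le_ne_top ?_ (measure_mono inter_subset_right)
    exact (isCompact_Icc.measure_lt_top).ne
  set M := (F.measure (S ∩ Icc 0 1)).toReal with hM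
  have key : ∀ y ∈ S ∩ Icc (0:ℝ) 1, y ≤ 3 * M + a := by
    rintro y ⟨hyS, hy0, hy1⟩
    have hsub2 : Ioc (0:ℝ) y ⊆ S ∩ Icc 0 1 := by
      rintro z ⟨hz0, hzy⟩
      exact ⟨hS hzy hyS, le_of_lt hz0, hzy.trans hy1⟩
    have h1 : F.measure (Ioc 0 y) ≤ F.measure (S ∩ Icc 0 1) := measure_mono hsub2
    rw [StieltjesFunction.measure_Ioc, hF0, sub_zero] at h1
    have hFy : F y ≤ M := by
      have := ENNReal.toReal_mono hfin h1
      rwa [ENNReal.toReal_ofReal (hF0 ▸ F.mono hy0)] at this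
    have := hF y ⟨hy0, hy1⟩
    linarith
  have hxle : x ≤ 3 * M + a := csSup_le hne key
  have hsub3 : S ∩ Icc a (1 - a) ⊆ Icc a x := by
    rintro y hy
    exact ⟨hy.2.1, le_csSup hbdd ⟨hy.1, hsub hy.2⟩⟩
  calc volume (S ∩ Icc a (1 - a)) ≤ volume (Icc a x) := measure_mono hsub3
    _ = ENNReal.ofReal (x - a) := by rw [Real.volume_Icc]
    _ ≤ ENNReal.ofReal (3 * M) := ENNReal.ofReal_le_ofReal (by linarith)
    _ = 3 * ENNReal.ofReal M := by
        rw [ENNReal.ofReal_mul (by norm_num)]; norm_num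
    _ = 3 * F.measure (S ∩ Icc 0 1) := by rw [ENNReal.ofReal_toReal hfin]

lemma lemA (F : StieltjesFunction ℝ) (a : ℝ) (ha : a ∈ Set.Ioo (0:ℝ) (1/2))
    (hF0 : F 0 = 0) (hF : ∀ t ∈ Set.Icc (0:ℝ) 1, (1/3) * (t - a) ≤ F t)
    (g : ℝ → ℝ) (hg : Measurable g) (hga : Antitone g) (hgn : ∀ s, 0 ≤ g s) :
    ∫⁻ s in Icc a (1 - a), ENNReal.ofReal (g s) ≤
      3 * ∫⁻ s in Icc (0:ℝ) 1, ENNReal.ofReal (g s) ∂F.measure := by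
  rw [lintegral_eq_lintegral_meas_le _ (Filter.Eventually.of_forall hgn) hg.aemeasurable,
    lintegral_eq_lintegral_meas_le _ (Filter.Eventually.of_forall hgn) hg.aemeasurable,
    ← lintegral_const_mul' _ _ (by norm_num : (3:ℝ≥0∞) ≠ ⊤)]
  refine lintegral_mono fun t => ?_
  rw [Measure.restrict_apply' measurableSet_Icc, Measure.restrict_apply' measurableSet_Icc]
  exact lemB F a ha hF0 hF _ (fun u v hvu hu => hu.trans (hga hvu))

/-- Lower bound for a double Lebesgue–Stieltjes integral against distribution functions
dominated below by affine functions, by a Lebesgue double integral over a sub-square. -/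
theorem stmt3 (F₁ F₂ : StieltjesFunction ℝ) (a₁ a₂ : ℝ)
    (ha₁ : a₁ ∈ Set.Ioo (0 : ℝ) (1 / 2)) (ha₂ : a₂ ∈ Set.Ioo (0 : ℝ) (1 / 2))
    (h₁0 : F₁ 0 = 0) (h₁1 : F₁ 1 = 1) (h₂0 : F₂ 0 = 0) (h₂1 : F₂ 1 = 1)
    (hF₁ : ∀ t ∈ Set.Icc (0 : ℝ) 1, (1 / 3) * (t - a₁) ≤ F₁ t)
    (hF₂ : ∀ t ∈ Set.Icc (0 : ℝ) 1, (1 / 3) * (t - a₂) ≤ F₂ t)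
    (h : ℝ → ℝ → ℝ) (hmeas : Measurable (Function.uncurry h))
    (hnonneg : ∀ s t, 0 ≤ h s t)
    (hanti₁ : ∀ t, Antitone (fun s => h s t)) (hanti₂ : ∀ s, Antitone (h s)) :
    (1 / 9) * ∫ t in Set.Icc a₂ (1 - a₂), ∫ s in Set.Icc a₁ (1 - a₁), h s t ≤
      ∫ t in Set.Icc (0 : ℝ) 1, (∫ s in Set.Icc (0 : ℝ) 1, h s t ∂F₁.measure)
        ∂F₂.measure := by
  have hm1 : ∀ t, Measurable (fun s => h s t) := fun t =>
    hmeas.comp (measurable_id.prodMk measurable_const)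
  set μ₁ := F₁.measure with hμ₁
  set μ₂ := F₂.measure with hμ₂
  set I : ℝ → ℝ≥0∞ := fun t => ∫⁻ s in Icc a₁ (1 - a₁), ENNReal.ofReal (h s t) with hI
  set J : ℝ → ℝ≥0∞ := fun t => ∫⁻ s in Icc (0:ℝ) 1, ENNReal.ofReal (h s t) ∂μ₁ with hJ
  have hIJ : ∀ t, I t ≤ 3 * J t := fun t =>
    lemA F₁ a₁ ha₁ h₁0 hF₁ _ (hm1 t) (hanti₁ t) (fun s => hnonneg s t)
  have hIfin : ∀ t, I t ≠ ⊤ := by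
    intro t
    have hb : I t ≤ ∫⁻ s in Icc a₁ (1 - a₁), ENNReal.ofReal (h a₁ t) :=
      setLIntegral_mono' measurableSet_Icc fun s hs =>
        ENNReal.ofReal_le_ofReal ((hanti₁ t) hs.1)
    refine ne_top_of_le_ne_top ?_ hb
    rw [setLIntegral_const]
    exact ENNReal.mul_ne_top ENNReal.ofReal_ne_top (by simp [Real.volume_Icc])
  have hI_anti : Antitone I := fun t t' htt' =>
    lintegral_mono fun s => ENNReal.ofReal_le_ofReal (hanti₂ s htt')
  set ℓ : ℝ → ℝ := fun t => (I t).toReal with hℓ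
  have hℓ_anti : Antitone ℓ := fun t t' htt' => ENNReal.toReal_mono (hIfin t) (hI_anti htt')
  have hℓ_nonneg : ∀ t, 0 ≤ ℓ t := fun t => ENNReal.toReal_nonneg
  have hofℓ : ∀ t, ENNReal.ofReal (ℓ t) = I t := fun t => ENNReal.ofReal_toReal (hIfin t)
  have outer := lemA F₂ a₂ ha₂ h₂0 hF₂ ℓ hℓ_anti.measurable hℓ_anti hℓ_nonneg
  simp_rw [hofℓ] at outer
  have chain : (∫⁻ t in Icc a₂ (1 - a₂), I t) ≤ 9 * ∫⁻ t in Icc (0:ℝ) 1, J t ∂μ₂ := by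
    refine outer.trans ?_
    rw [show (9:ℝ≥0∞) = 3 * 3 by norm_num, mul_assoc]
    refine mul_le_mul_right ?_ 3
    calc ∫⁻ t in Icc (0:ℝ) 1, I t ∂μ₂ ≤ ∫⁻ t in Icc (0:ℝ) 1, 3 * J t ∂μ₂ :=
          lintegral_mono fun t => hIJ t
      _ = 3 * ∫⁻ t in Icc (0:ℝ) 1, J t ∂μ₂ := lintegral_const_mul' _ _ (by norm_num)
  have hμ₁fin : μ₁ (Icc (0:ℝ) 1) ≠ ⊤ := isCompact_Icc.measure_lt_top.ne
  have hJbound : ∀ t ∈ Icc (0:ℝ) 1, J t ≤ ENNReal.ofReal (h 0 0) * μ₁ (Icc (0:ℝ) 1) := by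
    intro t ht
    calc J t ≤ ∫⁻ _ in Icc (0:ℝ) 1, ENNReal.ofReal (h 0 0) ∂μ₁ :=
          setLIntegral_mono' measurableSet_Icc fun s hs =>
            ENNReal.ofReal_le_ofReal (((hanti₁ t) hs.1).trans ((hanti₂ 0) ht.1))
      _ = ENNReal.ofReal (h 0 0) * μ₁ (Icc (0:ℝ) 1) := setLIntegral_const _ _
  have hRRfin : (∫⁻ t in Icc (0:ℝ) 1, J t ∂μ₂) ≠ ⊤ := by
    refine ne_top_of_le_ne_top ?_ (setLIntegral_mono' measurableSet_Icc hJbound)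
    rw [setLIntegral_const]
    exact ENNReal.mul_ne_top (ENNReal.mul_ne_top ENNReal.ofReal_ne_top hμ₁fin)
      isCompact_Icc.measure_lt_top.ne
  -- Bochner conversions
  have hinnerL : ∀ t, (∫ s in Icc a₁ (1 - a₁), h s t) = ℓ t := fun t => by
    rw [hℓ, hI, integral_eq_lintegral_of_nonneg_ae
      (Filter.Eventually.of_forall fun s => hnonneg s t) (hm1 t).aestronglyMeasurable]
  have hA : (∫ t in Icc a₂ (1 - a₂), ∫ s in Icc a₁ (1 - a₁), h s t) =
      (∫⁻ t in Icc a₂ (1 - a₂), I t).toReal := by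
    simp_rw [hinnerL]
    rw [integral_eq_lintegral_of_nonneg_ae (Filter.Eventually.of_forall hℓ_nonneg)
      hℓ_anti.measurable.aestronglyMeasurable]
    simp_rw [hofℓ]
  have hint : ∀ t, IntegrableOn (fun s => h s t) (Icc (0:ℝ) 1) μ₁ := by
    intro t
    refine Integrable.mono' (g := fun _ => h 0 t)
      (integrableOn_const isCompact_Icc.measure_lt_top.ne)
      (hm1 t).aestronglyMeasurable ?_
    refine (ae_restrict_iff' measurableSet_Icc).2 (Filter.Eventually.of_forall fun s hs => ?_)
    rw [Real.norm_eq_abs, abs_of_nonneg (hnonneg s t)]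
    exact (hanti₁ t) hs.1
  have hf_anti : Antitone (fun t => ∫ s in Icc (0:ℝ) 1, h s t ∂μ₁) := fun t t' htt' =>
    integral_mono (hint t') (hint t) fun s => hanti₂ s htt'
  have hf_nonneg : ∀ t, 0 ≤ ∫ s in Icc (0:ℝ) 1, h s t ∂μ₁ := fun t =>
    integral_nonneg fun s => hnonneg s t
  have hof : ∀ t, ENNReal.ofReal (∫ s in Icc (0:ℝ) 1, h s t ∂μ₁) = J t := fun t =>
    ofReal_integral_eq_lintegral_ofReal (hint t)
      (Filter.Eventually.of_forall fun s => hnonneg s t)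
  have hB : (∫ t in Icc (0:ℝ) 1, (∫ s in Icc (0:ℝ) 1, h s t ∂μ₁) ∂μ₂) =
      (∫⁻ t in Icc (0:ℝ) 1, J t ∂μ₂).toReal := by
    rw [integral_eq_lintegral_of_nonneg_ae (Filter.Eventually.of_forall hf_nonneg)
      hf_anti.measurable.aestronglyMeasurable]
    simp_rw [hof]
  rw [hA, hB]
  have h9 : (∫⁻ t in Icc a₂ (1 - a₂), I t).toReal ≤
      9 * (∫⁻ t in Icc (0:ℝ) 1, J t ∂μ₂).toReal := by
    have := ENNReal.toReal_mono (ENNReal.mul_ne_top (by norm_num) hRRfin) chain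
    rwa [ENNReal.toReal_mul, show ((9:ℝ≥0∞)).toReal = 9 by norm_num] at this
  linarith
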